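/- Let S be a semiring, μ : Σ_r^* → S^{n×n} a monoid morphism, α, η ∈ S^{1×n}, with η ≠ 0. Define μ' : Σ_{r+1}^* → S^{(n+1)×(n+1)} by μ'(a_{r+1}) = [1, 0_{1×n}; 0_{n×1}, 0_{n×n}] and μ'(a_i) = [0, α μ(a_i); 0_{n×1}, μ(a_i)] for 1 ≤ i ≤ r, and let M_η = [0, η; 0_{n×1}, 0_{n×n}]. Then there exists w ∈ Σ_r^+ with α μ(w) = η if and only if there exists z ∈ Σ_{r+1}^+ with μ'(z) = M_η. -/

import Mathlib

open Matrix

/-- Generator images for the reduction of vector reachability to matrix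
reachability: the extra letter `a_{r+1}` (here `Fin.last r`) goes to
`[1, 0; 0, 0]` and each original letter `a_i` to `[0, αμ(a_i); 0, μ(a_i)]`
(blocks of sizes `1` and `n`). -/
def vecToMatGen {S : Type*} [Semiring S] {r n : ℕ}
    (μ : FreeMonoid (Fin r) →* Matrix (Fin n) (Fin n) S)
    (α : Matrix (Fin 1) (Fin n) S) :
    Fin (r + 1) → Matrix (Fin 1 ⊕ Fin n) (Fin 1 ⊕ Fin n) S := fun i =>
  Fin.lastCases (Matrix.fromBlocks 1 0 0 0)
    (fun j => Matrix.fromBlocks 0 (α * μ (FreeMonoid.of j)) 0 (μ (FreeMonoid.of j))) i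

section Aux

variable {S : Type*} [Semiring S] {r n : ℕ}
    (μ : FreeMonoid (Fin r) →* Matrix (Fin n) (Fin n) S)
    (α : Matrix (Fin 1) (Fin n) S)

lemma vecToMatGen_last : vecToMatGen μ α (Fin.last r) = Matrix.fromBlocks 1 0 0 0 := by
  simp [vecToMatGen]

lemma vecToMatGen_castSucc (j : Fin r) :
    vecToMatGen μ α j.castSucc =
      Matrix.fromBlocks 0 (α * μ (FreeMonoid.of j)) 0 (μ (FreeMonoid.of j)) := by
  simp [vecToMatGen]

lemma lift_map_castSucc : ∀ (l : List (Fin r)) (a : Fin r),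
    FreeMonoid.lift (vecToMatGen μ α)
        (FreeMonoid.map Fin.castSucc (FreeMonoid.ofList (a :: l))) =
      Matrix.fromBlocks 0 (α * μ (FreeMonoid.ofList (a :: l))) 0
        (μ (FreeMonoid.ofList (a :: l))) := by
  intro l
  induction l with
  | nil =>
      intro a
      have : FreeMonoid.ofList [a] = FreeMonoid.of a := rfl
      simp [this, vecToMatGen_castSucc]
  | cons b t ih =>
      intro a
      have h1 : FreeMonoid.ofList (a :: b :: t) =
          FreeMonoid.of a * FreeMonoid.ofList (b :: t) := rfl
      rw [h1, _root_.map_mul, _root_.map_mul, _root_.map_mul, ih b, FreeMonoid.map_of,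
        FreeMonoid.lift_eval_of, vecToMatGen_castSucc,
        Matrix.fromBlocks_multiply]
      simp
      rw [Matrix.mul_assoc]

lemma classify : ∀ (l : List (Fin (r + 1))) (a : Fin (r + 1)),
    FreeMonoid.lift (vecToMatGen μ α) (FreeMonoid.ofList (a :: l)) = 0 ∨
    FreeMonoid.lift (vecToMatGen μ α) (FreeMonoid.ofList (a :: l)) =
      Matrix.fromBlocks 1 0 0 0 ∨
    (∃ w : FreeMonoid (Fin r), w ≠ 1 ∧
      FreeMonoid.lift (vecToMatGen μ α) (FreeMonoid.ofList (a :: l)) =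
        Matrix.fromBlocks 0 (α * μ w) 0 (μ w)) ∨
    (∃ w : FreeMonoid (Fin r), w ≠ 1 ∧
      FreeMonoid.lift (vecToMatGen μ α) (FreeMonoid.ofList (a :: l)) =
        Matrix.fromBlocks 0 (α * μ w) 0 0) := by
  intro l
  induction l with
  | nil =>
      intro a
      have hone : FreeMonoid.ofList [a] = FreeMonoid.of a := rfl
      rw [hone, FreeMonoid.lift_eval_of]
      induction a using Fin.lastCases with
      | last => right; left; exact vecToMatGen_last μ α
      | cast j =>
          right; right; left
          refine ⟨FreeMonoid.of j, ?_, vecToMatGen_castSucc μ α j⟩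
          intro h
          simpa using congrArg FreeMonoid.toList h
  | cons b t ih =>
      intro a
      have h1 : FreeMonoid.ofList (a :: b :: t) =
          FreeMonoid.of a * FreeMonoid.ofList (b :: t) := rfl
      rw [h1, _root_.map_mul, FreeMonoid.lift_eval_of]
      rcases ih b with h | h | ⟨w, hw, h⟩ | ⟨w, hw, h⟩ <;> rw [h]
      · left; simp
      · induction a using Fin.lastCases with
        | last =>
            right; left
            rw [vecToMatGen_last, Matrix.fromBlocks_multiply]; simp
        | cast j =>
            left
            rw [vecToMatGen_castSucc, Matrix.fromBlocks_multiply]; simp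
      · induction a using Fin.lastCases with
        | last =>
            right; right; right
            refine ⟨w, hw, ?_⟩
            rw [vecToMatGen_last, Matrix.fromBlocks_multiply]; simp
        | cast j =>
            right; right; left
            refine ⟨FreeMonoid.of j * w, ?_, ?_⟩
            · intro hc
              have := congrArg FreeMonoid.toList hc
              simpa using this
            · rw [vecToMatGen_castSucc, Matrix.fromBlocks_multiply]
              simp
              rw [Matrix.mul_assoc]
      · induction a using Fin.lastCases with
        | last =>
            right; right; right
            refine ⟨w, hw, ?_⟩
            rw [vecToMatGen_last, Matrix.fromBlocks_multiply]; simp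
        | cast j =>
            left
            rw [vecToMatGen_castSucc, Matrix.fromBlocks_multiply]; simp

end Aux

/-- Reduction of vector reachability with nonzero target `η` to matrix
reachability: `∃ w ∈ Σ_r^+, αμ(w) = η` iff `∃ z ∈ Σ_{r+1}^+, μ'(z) = M_η`,
where `M_η = [0, η; 0, 0]`. -/
theorem vector_to_matrix {S : Type*} [Semiring S] {r n : ℕ}
    (μ : FreeMonoid (Fin r) →* Matrix (Fin n) (Fin n) S)
    (α η : Matrix (Fin 1) (Fin n) S) (hη : η ≠ 0) :
    (∃ w : FreeMonoid (Fin r), w ≠ 1 ∧ α * μ w = η) ↔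
    (∃ z : FreeMonoid (Fin (r + 1)), z ≠ 1 ∧
      FreeMonoid.lift (vecToMatGen μ α) z = Matrix.fromBlocks 0 η 0 0) := by
  constructor
  · rintro ⟨w, hw, hαw⟩
    refine ⟨FreeMonoid.of (Fin.last r) * FreeMonoid.map Fin.castSucc w, ?_, ?_⟩
    · intro hc
      have := congrArg FreeMonoid.toList hc
      simpa using this
    · obtain ⟨a, l, hl⟩ : ∃ a l, w = FreeMonoid.ofList (a :: l) := by
        cases hwl : FreeMonoid.toList w with
        | nil =>
            exact absurd (by rw [← FreeMonoid.ofList_toList w, hwl]; rfl) hw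
        | cons a l => exact ⟨a, l, by rw [← FreeMonoid.ofList_toList w, hwl]⟩
      rw [_root_.map_mul, FreeMonoid.lift_eval_of, hl, lift_map_castSucc,
        vecToMatGen_last, Matrix.fromBlocks_multiply, ← hl, hαw]
      simp
  · rintro ⟨z, hz, hlz⟩
    obtain ⟨a, l, hl⟩ : ∃ a l, z = FreeMonoid.ofList (a :: l) := by
      cases hzl : FreeMonoid.toList z with
      | nil =>
          exact absurd (by rw [← FreeMonoid.ofList_toList z, hzl]; rfl) hz
      | cons a l => exact ⟨a, l, by rw [← FreeMonoid.ofList_toList z, hzl]⟩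
    rw [hl] at hlz
    rcases classify μ α l a with h | h | ⟨w, hw, h⟩ | ⟨w, hw, h⟩ <;>
        rw [h] at hlz
    · exact absurd (by simpa [← Matrix.fromBlocks_zero] using (congrArg Matrix.toBlocks₁₂ hlz).symm) hη
    · have h1 : (1 : Matrix (Fin 1) (Fin 1) S) = 0 := by
        simpa using congrArg Matrix.toBlocks₁₁ hlz
      have h0 : (0 : S) = 1 := by
        have := congrFun (congrFun h1 0) 0
        simpa [Matrix.one_apply] using this.symm
      have : Subsingleton S := subsingleton_of_zero_eq_one h0
      exact absurd (Subsingleton.elim η 0) hη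
    · have hb : μ w = 0 := by
        simpa using congrArg Matrix.toBlocks₂₂ hlz
      have ht : α * μ w = η := by
        simpa using congrArg Matrix.toBlocks₁₂ hlz
      rw [hb, Matrix.mul_zero] at ht
      exact absurd ht.symm hη
    · exact ⟨w, hw, by simpa using congrArg Matrix.toBlocks₁₂ hlz⟩
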